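/- Let n ≥ 2 and let U ⊆ ℝⁿ be open. For every C² function v : U → ℝ, at every point of U one has | |D²v·Dv|² − Δv·Δ∞v − (1/2)(|D²v|² − (Δv)²)·|Dv|² | ≤ ((n−2)/2)·(|D²v|²·|Dv|² − |D²v·Dv|²). -/

import Mathlib

open MeasureTheory Real Set

/-- partial derivative in the `i`-th coordinate direction -/
noncomputable def pd {n : ℕ} (f : (Fin n → ℝ) → ℝ) (i : Fin n) (x : Fin n → ℝ) : ℝ :=
  fderiv ℝ f x (Pi.single i 1)

/-- Hessian entry `∂_i ∂_j f` -/
noncomputable def hess {n : ℕ} (f : (Fin n → ℝ) → ℝ) (i j : Fin n) (x : Fin n → ℝ) : ℝ :=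
  pd (pd f j) i x

/-- squared Euclidean norm of the gradient `|Df|²` -/
noncomputable def gradSq {n : ℕ} (f : (Fin n → ℝ) → ℝ) (x : Fin n → ℝ) : ℝ :=
  ∑ i, (pd f i x) ^ 2

/-- Laplacian `Δf = tr D²f` -/
noncomputable def lap {n : ℕ} (f : (Fin n → ℝ) → ℝ) (x : Fin n → ℝ) : ℝ :=
  ∑ i, hess f i i x

/-- ∞-Laplacian `Δ∞f = ⟨D²f·Df, Df⟩` -/
noncomputable def infLap {n : ℕ} (f : (Fin n → ℝ) → ℝ) (x : Fin n → ℝ) : ℝ :=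
  ∑ i, ∑ j, hess f i j x * pd f j x * pd f i x

/-- squared Frobenius norm of the Hessian `|D²f|²` -/
noncomputable def hessSq {n : ℕ} (f : (Fin n → ℝ) → ℝ) (x : Fin n → ℝ) : ℝ :=
  ∑ i, ∑ j, (hess f i j x) ^ 2

/-- squared Euclidean norm `|D²f·Df|²` -/
noncomputable def hessGradSq {n : ℕ} (f : (Fin n → ℝ) → ℝ) (x : Fin n → ℝ) : ℝ :=
  ∑ i, (∑ j, hess f i j x * pd f j x) ^ 2

/-- time derivative `u_t` of a function `u(x,t)` -/
noncomputable def tderiv {n : ℕ} (u : (Fin n → ℝ) → ℝ → ℝ) (x : Fin n → ℝ) (t : ℝ) : ℝ :=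
  deriv (u x) t


lemma cs_double {n : ℕ} (f g : Fin n → Fin n → ℝ) :
    (∑ i, ∑ j, f i j * g i j) ^ 2 ≤ (∑ i, ∑ j, (f i j) ^ 2) * (∑ i, ∑ j, (g i j) ^ 2) := by
  have h := Finset.sum_mul_sq_le_sq_mul_sq Finset.univ (fun z : Fin n × Fin n => f z.1 z.2)
      (fun z : Fin n × Fin n => g z.1 z.2)
  simpa [Fintype.sum_prod_type] using h

noncomputable def auxM {n : ℕ} (A : Fin n → Fin n → ℝ) (p q : Fin n → ℝ) (S a : ℝ)
    (i j : Fin n) : ℝ :=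
  S ^ 2 * A i j - S * p i * q j - S * q i * p j + a * p i * p j

noncomputable def auxP {n : ℕ} (p : Fin n → ℝ) (S : ℝ) (i j : Fin n) : ℝ :=
  (if i = j then S else 0) - p i * p j

lemma key_cs (n : ℕ) (A : Fin n → Fin n → ℝ) (hA : ∀ i j, A i j = A j i)
    (p q : Fin n → ℝ) (hq : ∀ i, q i = ∑ j, A i j * p j)
    (S T F G a : ℝ) (hS : S = ∑ i, (p i) ^ 2) (hT : T = ∑ i, A i i)
    (hF : F = ∑ i, ∑ j, (A i j) ^ 2) (hG : G = ∑ i, (q i) ^ 2)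
    (ha : a = ∑ i, q i * p i) (hSpos : 0 < S) :
    (T * S - a) ^ 2 ≤ ((n : ℝ) - 1) * (F * S ^ 2 - 2 * G * S + a ^ 2) := by
  have hcol : ∀ j, ∑ i, A i j * p i = q j := fun j => by
    rw [hq j]; exact Finset.sum_congr rfl fun i _ => by rw [hA i j]
  -- M p = 0 rowwise
  have hMp : ∀ i, ∑ j, auxM A p q S a i j * p j = 0 := by
    intro i
    have e : ∀ j, auxM A p q S a i j * p j
        = S ^ 2 * (A i j * p j) - S * p i * (q j * p j) - S * q i * (p j) ^ 2
          + a * p i * (p j) ^ 2 := fun j => by simp only [auxM]; ring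
    rw [Finset.sum_congr rfl fun j _ => e j]
    simp only [Finset.sum_add_distrib, Finset.sum_sub_distrib, ← Finset.mul_sum]
    rw [← hq i, ← ha, ← hS]; ring
  -- M q rowwise
  have hMq : ∀ i, ∑ j, auxM A p q S a i j * q j
      = S ^ 2 * (∑ j, A i j * q j) - S * p i * G - S * q i * a + a * p i * a := by
    intro i
    have e : ∀ j, auxM A p q S a i j * q j
        = S ^ 2 * (A i j * q j) - S * p i * (q j) ^ 2 - S * q i * (q j * p j)
          + a * p i * (q j * p j) := fun j => by simp only [auxM]; ring
    rw [Finset.sum_congr rfl fun j _ => e j]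
    simp only [Finset.sum_add_distrib, Finset.sum_sub_distrib, ← Finset.mul_sum]
    rw [← hG, ← ha]
  -- M A rowwise
  have hMA : ∀ i, ∑ j, auxM A p q S a i j * A i j
      = S ^ 2 * (∑ j, (A i j) ^ 2) - S * p i * (∑ j, A i j * q j) - S * q i * q i
        + a * p i * q i := by
    intro i
    have e : ∀ j, auxM A p q S a i j * A i j
        = S ^ 2 * (A i j) ^ 2 - S * p i * (A i j * q j) - S * q i * (A i j * p j)
          + a * p i * (A i j * p j) := fun j => by simp only [auxM]; ring
    rw [Finset.sum_congr rfl fun j _ => e j]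
    simp only [Finset.sum_add_distrib, Finset.sum_sub_distrib, ← Finset.mul_sum]
    rw [← hq i]
  -- ∑ p i * (A q) i = G
  have hpR : ∑ i, p i * (∑ j, A i j * q j) = G := by
    have e : ∀ i, p i * (∑ j, A i j * q j) = ∑ j, q j * (A i j * p i) := fun i => by
      rw [Finset.mul_sum]; exact Finset.sum_congr rfl fun j _ => by ring
    rw [Finset.sum_congr rfl fun i _ => e i, Finset.sum_comm]
    have e2 : ∀ j, ∑ i, q j * (A i j * p i) = q j * q j := fun j => by
      rw [← Finset.mul_sum, hcol j]
    rw [Finset.sum_congr rfl fun j _ => e2 j, hG]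
    exact Finset.sum_congr rfl fun i _ => (sq (q i)).symm
  have hqq : ∑ i, q i * q i = G := by
    rw [hG]; exact Finset.sum_congr rfl fun i _ => (sq (q i)).symm
  -- I3 : Frobenius norm of M
  have hMM : ∑ i, ∑ j, (auxM A p q S a i j) ^ 2
      = S ^ 2 * (F * S ^ 2 - 2 * G * S + a ^ 2) := by
    have per : ∀ i, ∑ j, (auxM A p q S a i j) ^ 2
        = S ^ 4 * (∑ j, (A i j) ^ 2) - 2 * S ^ 3 * (p i * (∑ j, A i j * q j))
          - S ^ 3 * (q i * q i) + 2 * S ^ 2 * a * (q i * p i)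
          + S ^ 2 * G * (p i) ^ 2 - S * a ^ 2 * (p i) ^ 2 := by
      intro i
      have e : ∀ j, (auxM A p q S a i j) ^ 2
          = S ^ 2 * (auxM A p q S a i j * A i j) - S * p i * (auxM A p q S a i j * q j)
            - S * q i * (auxM A p q S a i j * p j)
            + a * p i * (auxM A p q S a i j * p j) := fun j => by simp only [auxM]; ring
      rw [Finset.sum_congr rfl fun j _ => e j]
      simp only [Finset.sum_add_distrib, Finset.sum_sub_distrib, ← Finset.mul_sum]
      rw [hMA i, hMq i, hMp i]; ring
    rw [Finset.sum_congr rfl fun i _ => per i]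
    simp only [Finset.sum_add_distrib, Finset.sum_sub_distrib, ← Finset.mul_sum]
    rw [← hF, hpR, hqq, ← ha, ← hS]; ring
  -- I1 : inner product of M and P
  have hMP : ∑ i, ∑ j, auxM A p q S a i j * auxP p S i j = S ^ 3 * T - S ^ 2 * a := by
    have per : ∀ i, ∑ j, auxM A p q S a i j * auxP p S i j
        = S * auxM A p q S a i i := by
      intro i
      have e : ∀ j, auxM A p q S a i j * auxP p S i j
          = (if i = j then S * auxM A p q S a i j else 0)
            - p i * (auxM A p q S a i j * p j) := by
        intro j
        by_cases hij : i = j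
        · subst hij; simp only [auxP, if_true, eq_self_iff_true]; ring
        · simp only [auxP, hij, if_false]; ring
      rw [Finset.sum_congr rfl fun j _ => e j]
      rw [Finset.sum_sub_distrib, ← Finset.mul_sum, hMp i, Finset.sum_ite_eq]
      simp
    rw [Finset.sum_congr rfl fun i _ => per i]
    have e2 : ∀ i, S * auxM A p q S a i i
        = S ^ 3 * A i i - S ^ 2 * (q i * p i) - S ^ 2 * (q i * p i) + S * a * (p i) ^ 2 := by
      intro i; simp only [auxM]; ring
    rw [Finset.sum_congr rfl fun i _ => e2 i]
    simp only [Finset.sum_add_distrib, Finset.sum_sub_distrib, ← Finset.mul_sum]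
    rw [← hT, ← ha, ← hS]; ring
  -- I2 : Frobenius norm of P
  have hPP : ∑ i, ∑ j, (auxP p S i j) ^ 2 = ((n : ℝ) - 1) * S ^ 2 := by
    have per : ∀ i, ∑ j, (auxP p S i j) ^ 2 = S ^ 2 - S * (p i) ^ 2 := by
      intro i
      have e : ∀ j, (auxP p S i j) ^ 2
          = (if i = j then S ^ 2 - 2 * S * (p i * p j) else 0) + (p i) ^ 2 * (p j) ^ 2 := by
        intro j
        by_cases hij : i = j
        · subst hij; simp only [auxP, if_true, eq_self_iff_true]; ring
        · simp only [auxP, hij, if_false]; ring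
      rw [Finset.sum_congr rfl fun j _ => e j]
      rw [Finset.sum_add_distrib, ← Finset.mul_sum, Finset.sum_ite_eq, ← hS]
      simp only [Finset.mem_univ, if_true]
      ring
    rw [Finset.sum_congr rfl fun i _ => per i]
    rw [Finset.sum_sub_distrib, ← Finset.mul_sum, ← hS]
    simp only [Finset.sum_const, Finset.card_univ, Fintype.card_fin, nsmul_eq_mul]
    ring
  have hcs := cs_double (auxM A p q S a) (auxP p S)
  rw [hMP, hMM, hPP] at hcs
  have e1 : (S ^ 3 * T - S ^ 2 * a) ^ 2 = S ^ 4 * (T * S - a) ^ 2 := by ring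
  have e2 : S ^ 2 * (F * S ^ 2 - 2 * G * S + a ^ 2) * (((n : ℝ) - 1) * S ^ 2)
      = S ^ 4 * (((n : ℝ) - 1) * (F * S ^ 2 - 2 * G * S + a ^ 2)) := by ring
  rw [e1, e2] at hcs
  exact le_of_mul_le_mul_left hcs (pow_pos hSpos 4)

lemma key_abs (n : ℕ) (hn : 2 ≤ n) (A : Fin n → Fin n → ℝ) (hA : ∀ i j, A i j = A j i)
    (p q : Fin n → ℝ) (hq : ∀ i, q i = ∑ j, A i j * p j)
    (S T F G a : ℝ) (hS : S = ∑ i, (p i) ^ 2) (hT : T = ∑ i, A i i)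
    (hF : F = ∑ i, ∑ j, (A i j) ^ 2) (hG : G = ∑ i, (q i) ^ 2)
    (ha : a = ∑ i, q i * p i) :
    |G - T * a - 1 / 2 * (F - T ^ 2) * S| ≤ ((n : ℝ) - 2) / 2 * (F * S - G) := by
  have hCS : a ^ 2 ≤ G * S := by
    rw [ha, hG, hS]
    exact Finset.sum_mul_sq_le_sq_mul_sq _ q p
  rcases lt_or_ge n 3 with h2 | h3
  · -- n = 2 : exact identity
    have hn2 : n = 2 := by omega
    subst hn2
    have hE : G - T * a - 1 / 2 * (F - T ^ 2) * S = 0 := by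
      rw [hG, ha, hT, hF, hS]
      simp only [hq, Fin.sum_univ_two]
      rw [hA 1 0]
      ring
    rw [hE, abs_zero]
    norm_num
  · -- n ≥ 3
    have hn3 : (3 : ℝ) ≤ (n : ℝ) := by exact_mod_cast h3
    have hS0 : 0 ≤ S := by
      rw [hS]; exact Finset.sum_nonneg fun i _ => sq_nonneg _
    rcases eq_or_lt_of_le hS0 with hSz | hSpos
    · -- p = 0
      have hp : ∀ i, p i = 0 := by
        intro i
        have h0 : ∑ i, (p i) ^ 2 = 0 := by rw [← hS, ← hSz]
        have := (Finset.sum_eq_zero_iff_of_nonneg fun i _ => sq_nonneg (p i)).1 h0 i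
          (Finset.mem_univ i)
        exact pow_eq_zero_iff two_ne_zero |>.1 this
      have hq0 : ∀ i, q i = 0 := fun i => by
        rw [hq i]; exact Finset.sum_eq_zero fun j _ => by rw [hp j, mul_zero]
      have hGz : G = 0 := by rw [hG]; exact Finset.sum_eq_zero fun i _ => by rw [hq0 i]; ring
      have haz : a = 0 := by rw [ha]; exact Finset.sum_eq_zero fun i _ => by rw [hq0 i]; ring
      rw [hGz, haz, ← hSz]
      simp
    · -- main case
      have hkey := key_cs n A hA p q hq S T F G a hS hT hF hG ha hSpos
      have hZ : 0 ≤ G * S - a ^ 2 := by linarith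
      have hX : 0 ≤ F * S ^ 2 - 2 * G * S + a ^ 2 := by nlinarith [sq_nonneg (T * S - a)]
      have hn2' : (0 : ℝ) ≤ (n : ℝ) - 2 := by linarith
      have hn3' : (0 : ℝ) ≤ (n : ℝ) - 3 := by linarith
      rw [abs_le]
      constructor
      · have h2S : 0 ≤ 2 * S * ((G - T * a - 1 / 2 * (F - T ^ 2) * S)
            + ((n : ℝ) - 2) / 2 * (F * S - G)) := by
          have e : 2 * S * ((G - T * a - 1 / 2 * (F - T ^ 2) * S)
              + ((n : ℝ) - 2) / 2 * (F * S - G))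
              = (T * S - a) ^ 2 + ((n : ℝ) - 3) * (F * S ^ 2 - 2 * G * S + a ^ 2)
                + ((n : ℝ) - 2) * (G * S - a ^ 2) := by ring
          rw [e]
          have h1 := mul_nonneg hn3' hX
          have h2 := mul_nonneg hn2' hZ
          nlinarith [sq_nonneg (T * S - a)]
        nlinarith [h2S, hSpos]
      · have h2S : 0 ≤ 2 * S * (((n : ℝ) - 2) / 2 * (F * S - G)
            - (G - T * a - 1 / 2 * (F - T ^ 2) * S)) := by
          have e : 2 * S * (((n : ℝ) - 2) / 2 * (F * S - G)
              - (G - T * a - 1 / 2 * (F - T ^ 2) * S))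
              = (((n : ℝ) - 1) * (F * S ^ 2 - 2 * G * S + a ^ 2) - (T * S - a) ^ 2)
                + ((n : ℝ) - 2) * (G * S - a ^ 2) := by ring
          rw [e]
          have h2 := mul_nonneg hn2' hZ
          linarith
        nlinarith [h2S, hSpos]

lemma key_ineq (n : ℕ) (hn : 2 ≤ n) (A : Fin n → Fin n → ℝ)
    (hA : ∀ i j, A i j = A j i) (p : Fin n → ℝ) :
    |(∑ i, (∑ j, A i j * p j) ^ 2) - (∑ i, A i i) * (∑ i, ∑ j, A i j * p j * p i)
        - 1 / 2 * ((∑ i, ∑ j, (A i j) ^ 2) - (∑ i, A i i) ^ 2) * (∑ i, (p i) ^ 2)|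
      ≤ ((n : ℝ) - 2) / 2 * ((∑ i, ∑ j, (A i j) ^ 2) * (∑ i, (p i) ^ 2)
          - ∑ i, (∑ j, A i j * p j) ^ 2) := by
  have h1 : (∑ i, ∑ j, A i j * p j * p i) = ∑ i, (∑ j, A i j * p j) * p i :=
    Finset.sum_congr rfl fun i _ => (Finset.sum_mul _ _ _).symm
  rw [h1]
  exact key_abs n hn A hA p (fun i => ∑ j, A i j * p j) (fun i => rfl)
    _ _ _ _ _ rfl rfl rfl rfl rfl

theorem fundamental_inequality_C2
    (n : ℕ) (hn : 2 ≤ n) (U : Set (Fin n → ℝ)) (hU : IsOpen U)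
    (v : (Fin n → ℝ) → ℝ) (hv : ContDiffOn ℝ 2 v U) :
    ∀ x ∈ U,
      |hessGradSq v x - lap v x * infLap v x
          - (1 / 2) * (hessSq v x - (lap v x) ^ 2) * gradSq v x|
        ≤ ((n : ℝ) - 2) / 2 * (hessSq v x * gradSq v x - hessGradSq v x) := by
  intro x hx
  have hct : ContDiffAt ℝ 2 v x := (hv x hx).contDiffAt (hU.mem_nhds hx)
  have hsymm := hct.isSymmSndFDerivAt (by simp [minSmoothness_of_isRCLikeNormedField])
  have hd : DifferentiableAt ℝ (fderiv ℝ v) x := by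
    have h1 : ContDiffAt ℝ 1 (fderiv ℝ v) x := hct.fderiv_right le_rfl
    exact h1.differentiableAt one_ne_zero
  have hkey : ∀ i j, hess v i j x
      = fderiv ℝ (fderiv ℝ v) x (Pi.single i 1) (Pi.single j 1) := by
    intro i j
    show fderiv ℝ (fun y => fderiv ℝ v y (Pi.single j 1)) x (Pi.single i 1) = _
    rw [fderiv_clm_apply hd (differentiableAt_const _)]
    simp
  have hsym : ∀ i j, hess v i j x = hess v j i x := by
    intro i j
    rw [hkey i j, hkey j i, hsymm (Pi.single i 1) (Pi.single j 1)]
  simp only [hessGradSq, lap, infLap, hessSq, gradSq]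
  exact key_ineq n hn (fun i j => hess v i j x) hsym (fun i => pd v i x)
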